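/- Let p ∈ (1/2, 1) and d = p/(1−p), and let π be the probability vector on {−1, d}² given by π₍₋₁,₋₁₎ = p², π₍₋₁,d₎ = π₍d,₋₁₎ = p(1−p), π₍d,d₎ = (1−p)². Fix θ ∈ (−1, 1) and consider minimizing the relative entropy D(s‖π) = Σ_{i,j} s_{i,j}·ln(s_{i,j}/π_{i,j}) over probability vectors s = (s₍₋₁,₋₁₎, s₍₋₁,d₎, s₍d,₋₁₎, s₍d,d₎) with all coordinates strictly positive, subject to s₍d,₋₁₎ − s₍₋₁,d₎ = θ. Then the minimizer exists, is unique, and satisfies s₍d,₋₁₎·s₍₋₁,d₎ = s₍d,d₎·s₍₋₁,₋₁₎ and s₍₋₁,₋₁₎ = d²·s₍d,d₎. -/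

import Mathlib

lemma gibbs_le (a b : ℝ) (ha : 0 < a) (hb : 0 < b) :
    a - b ≤ a * Real.log (a / b) := by
  have h1 : Real.log (b / a) ≤ b / a - 1 :=
    Real.log_le_sub_one_of_pos (div_pos hb ha)
  have h2 : Real.log (a / b) = - Real.log (b / a) := by
    rw [← Real.log_inv]; congr 1; field_simp
  rw [h2]
  have h3 := mul_le_mul_of_nonneg_left h1 ha.le
  have h4 : a * (b / a - 1) = b - a := by field_simp
  nlinarith

lemma gibbs_lt (a b : ℝ) (ha : 0 < a) (hb : 0 < b) (hne : a ≠ b) :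
    a - b < a * Real.log (a / b) := by
  have hba : b / a ≠ 1 := by
    intro h; exact hne ((div_eq_one_iff_eq ha.ne').mp h).symm
  have h1 : Real.log (b / a) < b / a - 1 :=
    Real.log_lt_sub_one_of_pos (div_pos hb ha) hba
  have h2 : Real.log (a / b) = - Real.log (b / a) := by
    rw [← Real.log_inv]; congr 1; field_simp
  rw [h2]
  have h3 := mul_lt_mul_of_pos_left h1 ha
  have h4 : a * (b / a - 1) = b - a := by field_simp
  nlinarith


open scoped BigOperators

/-- Relative entropy (Kullback–Leibler divergence) of `s` with respect to `π`
on a four-point space. Coordinates are indexed `0 ↔ (−1,−1)`, `1 ↔ (−1,d)`,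
`2 ↔ (d,−1)`, `3 ↔ (d,d)`. -/
noncomputable def KL (π s : Fin 4 → ℝ) : ℝ :=
  ∑ i, s i * Real.log (s i / π i)

/-- For `p ∈ (1/2,1)`, `d = p/(1−p)`,
`π = (p², p(1−p), p(1−p), (1−p)²)` and `θ ∈ (−1,1)`, the problem of
minimizing `D(s‖π)` over strictly positive probability vectors `s` with
`s₍d,₋₁₎ − s₍₋₁,d₎ = θ` has a unique minimizer, and it satisfies
`s₍d,₋₁₎·s₍₋₁,d₎ = s₍d,d₎·s₍₋₁,₋₁₎` and `s₍₋₁,₋₁₎ = d²·s₍d,d₎`. -/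
theorem stmt10 (p d : ℝ) (hp : 1 / 2 < p ∧ p < 1) (hd : d = p / (1 - p))
    (π : Fin 4 → ℝ)
    (hπ : π = ![p ^ 2, p * (1 - p), p * (1 - p), (1 - p) ^ 2])
    (θ : ℝ) (hθ : -1 < θ ∧ θ < 1) :
    ∃ s : Fin 4 → ℝ,
      ((∀ i, 0 < s i) ∧ (∑ i, s i) = 1 ∧ s 2 - s 1 = θ ∧
        ∀ t : Fin 4 → ℝ, (∀ i, 0 < t i) → (∑ i, t i) = 1 → t 2 - t 1 = θ →
          KL π s ≤ KL π t) ∧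
      (∀ t : Fin 4 → ℝ,
        ((∀ i, 0 < t i) ∧ (∑ i, t i) = 1 ∧ t 2 - t 1 = θ ∧
          ∀ u : Fin 4 → ℝ, (∀ i, 0 < u i) → (∑ i, u i) = 1 → u 2 - u 1 = θ →
            KL π t ≤ KL π u) → t = s) ∧
      s 2 * s 1 = s 3 * s 0 ∧ s 0 = d ^ 2 * s 3 := by
  obtain ⟨hp1, hp2⟩ := hp
  obtain ⟨hθ1, hθ2⟩ := hθ
  have hp0 : 0 < p := by linarith
  have h1p : 0 < 1 - p := by linarith
  have hq : 0 < p * (1 - p) := mul_pos hp0 h1p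
  have hr : 0 < p ^ 2 + (1 - p) ^ 2 := by positivity
  set q := p * (1 - p) with hq_def
  set r := p ^ 2 + (1 - p) ^ 2 with hr_def
  clear_value q r
  -- solve the quadratic for x = e^μ
  obtain ⟨x, hx, hquad⟩ :
      ∃ x : ℝ, 0 < x ∧ q * (1 - θ) * x ^ 2 = θ * r * x + q * (1 + θ) := by
    have h1t2 : 0 < 1 - θ ^ 2 := by nlinarith
    have hc : 0 < 4 * q ^ 2 * (1 - θ ^ 2) :=
      mul_pos (by positivity) h1t2
    have hDpos : 0 < θ ^ 2 * r ^ 2 + 4 * q ^ 2 * (1 - θ ^ 2) := by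
      nlinarith [sq_nonneg (θ * r)]
    set u := Real.sqrt (θ ^ 2 * r ^ 2 + 4 * q ^ 2 * (1 - θ ^ 2)) with hu_def
    have hu2 : u ^ 2 = θ ^ 2 * r ^ 2 + 4 * q ^ 2 * (1 - θ ^ 2) :=
      Real.sq_sqrt hDpos.le
    have hu0 : 0 ≤ u := Real.sqrt_nonneg _
    have hnum : 0 < θ * r + u := by
      nlinarith [hu2, hu0, hc, sq_nonneg (θ * r + u)]
    have h1θ : 0 < 1 - θ := by linarith
    refine ⟨(θ * r + u) / (2 * q * (1 - θ)), by positivity, ?_⟩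
    field_simp
    nlinarith [hu2]
  set S := r + q * x + q * x⁻¹ with hS_def
  clear_value S
  have hS : 0 < S := by rw [hS_def]; positivity
  set A := S⁻¹ with hA_def
  clear_value A
  have hA : 0 < A := by rw [hA_def]; positivity
  set s : Fin 4 → ℝ := ![A * p ^ 2, A * q * x⁻¹, A * q * x, A * (1 - p) ^ 2]
    with hs_def
  have hπpos : ∀ i, 0 < π i := by
    intro i; fin_cases i <;> simp [hπ] <;> positivity
  have hspos : ∀ i, 0 < s i := by
    intro i; fin_cases i <;> simp [hs_def] <;> positivity
  have hssum : (∑ i, s i) = 1 := by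
    have h1 : (∑ i, s i) = A * p ^ 2 + A * q * x⁻¹ + A * q * x + A * (1 - p) ^ 2 := by
      simp [Fin.sum_univ_four, hs_def]
    have h2 : A * p ^ 2 + A * q * x⁻¹ + A * q * x + A * (1 - p) ^ 2 = A * S := by
      rw [hS_def, hr_def]; ring
    rw [h1, h2, hA_def, inv_mul_cancel₀ hS.ne']
  have hscon : s 2 - s 1 = θ := by
    have h1 : s 2 - s 1 = A * q * x - A * q * x⁻¹ := by simp [hs_def]
    have hxne : x ≠ 0 := hx.ne'
    have key2 : q * x - q * x⁻¹ = θ * S := by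
      rw [hS_def]
      field_simp
      linear_combination hquad
    have h2 : A * q * x - A * q * x⁻¹ = A * (q * x - q * x⁻¹) := by ring
    rw [h1, h2, key2, hA_def, mul_comm θ S, ← mul_assoc, inv_mul_cancel₀ hS.ne', one_mul]
  have hxne : x ≠ 0 := hx.ne'
  have e0 : Real.log (s 0 / π 0) = Real.log A := by
    have h : s 0 / π 0 = A := by
      simp [hs_def, hπ]
      field_simp
    rw [h]
  have e1 : Real.log (s 1 / π 1) = Real.log A - Real.log x := by
    have h : s 1 / π 1 = A / x := by
      simp [hs_def, hπ]
      rw [hq_def]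
      field_simp
    rw [h, Real.log_div hA.ne' hxne]
  have e2 : Real.log (s 2 / π 2) = Real.log A + Real.log x := by
    have h : s 2 / π 2 = A * x := by
      simp [hs_def, hπ]
      rw [hq_def]
      field_simp
    rw [h, Real.log_mul hA.ne' hxne]
  have e3 : Real.log (s 3 / π 3) = Real.log A := by
    have h : s 3 / π 3 = A := by
      simp [hs_def, hπ]
      field_simp
    rw [h]
  have key : ∀ t : Fin 4 → ℝ, (∀ i, 0 < t i) → (∑ i, t i) = 1 → t 2 - t 1 = θ →
      KL π t = (∑ i, t i * Real.log (t i / s i)) + (Real.log A + θ * Real.log x) := by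
    intro t ht hts htc
    have split : ∀ i : Fin 4, Real.log (t i / π i)
        = Real.log (t i / s i) + Real.log (s i / π i) := by
      intro i
      rw [Real.log_div (ht i).ne' (hπpos i).ne', Real.log_div (ht i).ne' (hspos i).ne',
        Real.log_div (hspos i).ne' (hπpos i).ne']
      ring
    have hts4 : t 0 + t 1 + t 2 + t 3 = 1 := by
      rw [← Fin.sum_univ_four]; exact hts
    unfold KL
    rw [Fin.sum_univ_four, Fin.sum_univ_four]
    rw [split 0, split 1, split 2, split 3, e0, e1, e2, e3]
    linear_combination Real.log A * hts4 + Real.log x * htc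
  have hzero : (∑ i, s i * Real.log (s i / s i)) = 0 :=
    Finset.sum_eq_zero fun i _ => by rw [div_self (hspos i).ne', Real.log_one, mul_zero]
  have hKLs : KL π s = Real.log A + θ * Real.log x := by
    rw [key s hspos hssum hscon, hzero, zero_add]
  refine ⟨s, ⟨hspos, hssum, hscon, ?_⟩, ?_, ?_, ?_⟩
  · intro t ht hts htc
    rw [hKLs, key t ht hts htc]
    have h1 : ∀ i ∈ Finset.univ, t i - s i ≤ t i * Real.log (t i / s i) :=
      fun i _ => gibbs_le _ _ (ht i) (hspos i)
    have h3 := Finset.sum_le_sum h1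
    rw [Finset.sum_sub_distrib, hts, hssum] at h3
    linarith
  · rintro t ⟨ht, hts, htc, htmin⟩
    by_contra hne
    obtain ⟨j, hj⟩ := Function.ne_iff.mp hne
    have h3 := Finset.sum_lt_sum (fun i (_ : i ∈ Finset.univ) => gibbs_le _ _ (ht i) (hspos i))
      ⟨j, Finset.mem_univ j, gibbs_lt _ _ (ht j) (hspos j) hj⟩
    rw [Finset.sum_sub_distrib, hts, hssum] at h3
    have h4 : KL π s < KL π t := by
      rw [hKLs, key t ht hts htc]; linarith
    have h5 := htmin s hspos hssum hscon
    linarith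
  · have h1 : s 2 * s 1 = A * q * x * (A * q * x⁻¹) := by simp [hs_def]
    have h2 : s 3 * s 0 = A * (1 - p) ^ 2 * (A * p ^ 2) := by simp [hs_def]
    rw [h1, h2, hq_def]
    field_simp
  · have h1 : s 0 = A * p ^ 2 := by simp [hs_def]
    have h2 : s 3 = A * (1 - p) ^ 2 := by simp [hs_def]
    rw [h1, h2, hd]
    field_simp
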